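/- arXiv:2311.06525 — 7 statements merged into one kernel-verified Lean document; each statement's English description precedes it below -/
import Mathlib

section
/- For all p, q in (1, ∞), the inequality ((p-1)/p)^(1/q - 1/p) · (p/q)^(1/q) ≥ (((p-1)/p)^((p-1)/p)) / (((q-1)/q)^((q-1)/q)) holds. -/
theorem stmt_0 (p q : ℝ) (hp : 1 < p) (hq : 1 < q) :
    ((p - 1) / p) ^ (1 / q - 1 / p) * (p / q) ^ (1 / q) ≥
      ((p - 1) / p) ^ ((p - 1) / p) / ((q - 1) / q) ^ ((q - 1) / q) := by
  have hp0 : (0:ℝ) < p := lt_trans one_pos hp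
  have hq0 : (0:ℝ) < q := lt_trans one_pos hq
  set a := (p - 1) / p with ha_def
  set b := (q - 1) / q with hb_def
  have ha0 : 0 < a := div_pos (by linarith) hp0
  have ha1 : a < 1 := by rw [ha_def, div_lt_one hp0]; linarith
  have hb0 : 0 < b := div_pos (by linarith) hq0
  have hb1 : b < 1 := by rw [hb_def, div_lt_one hq0]; linarith
  have h1a : 1 - a = 1 / p := by rw [ha_def]; field_simp; ring
  have h1b : 1 - b = 1 / q := by rw [hb_def]; field_simp; ring
  have key : 0 ≤ b * (Real.log b - Real.log a) +
      (1 - b) * (Real.log (1 - b) - Real.log (1 - a)) := by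
    have h1 : Real.log a - Real.log b ≤ a / b - 1 := by
      have := Real.log_le_sub_one_of_pos (div_pos ha0 hb0)
      rwa [Real.log_div ha0.ne' hb0.ne'] at this
    have h2 : Real.log (1 - a) - Real.log (1 - b) ≤ (1 - a) / (1 - b) - 1 := by
      have := Real.log_le_sub_one_of_pos
        (div_pos (by linarith : (0:ℝ) < 1 - a) (by linarith : (0:ℝ) < 1 - b))
      rwa [Real.log_div (by linarith) (by linarith)] at this
    have e1 : b * (a / b) = a := by field_simp
    have e2 : (1 - b) * ((1 - a) / (1 - b)) = 1 - a := by
      rw [mul_comm]; exact div_mul_cancel₀ _ (by linarith)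
    nlinarith [mul_le_mul_of_nonneg_left h1 hb0.le,
      mul_le_mul_of_nonneg_left h2 (by linarith : (0:ℝ) ≤ 1 - b)]
  have hlogpq : Real.log (p / q) = Real.log (1 - b) - Real.log (1 - a) := by
    rw [h1a, h1b, one_div, one_div, Real.log_inv, Real.log_inv,
      Real.log_div hp0.ne' hq0.ne']
    ring
  have hexp : 1 / q - 1 / p = a - b := by
    rw [← h1a, ← h1b]; ring
  rw [ge_iff_le, Real.rpow_def_of_pos ha0, Real.rpow_def_of_pos (div_pos hp0 hq0),
    Real.rpow_def_of_pos ha0, Real.rpow_def_of_pos hb0,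
    ← Real.exp_add, ← Real.exp_sub]
  apply Real.exp_le_exp.mpr
  rw [hlogpq, hexp, ← h1b]
  nlinarith [key]
end

section
/- For all real numbers p, q > 1, (p'/q')^(1/q') · (p/q)^(1/q) ≥ 1, where p' = p/(p-1) and q' = q/(q-1) are the conjugate exponents. -/
theorem stmt_1 (p q : ℝ) (hp : 1 < p) (hq : 1 < q) :
    ((p / (p - 1)) / (q / (q - 1))) ^ (1 / (q / (q - 1))) * (p / q) ^ (1 / q) ≥ 1 := by
  have hp0 : (0:ℝ) < p := by linarith
  have hq0 : (0:ℝ) < q := by linarith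
  have hp1 : (0:ℝ) < p - 1 := by linarith
  have hq1 : (0:ℝ) < q - 1 := by linarith
  set p' : ℝ := p / (p - 1) with hp'
  set q' : ℝ := q / (q - 1) with hq'
  have hp'0 : 0 < p' := div_pos hp0 hp1
  have hq'0 : 0 < q' := div_pos hq0 hq1
  have hw₁ : (0:ℝ) ≤ 1 / q' := by positivity
  have hw₂ : (0:ℝ) ≤ 1 / q := by positivity
  have ha : (0:ℝ) ≤ q' / p' := by positivity
  have hb : (0:ℝ) ≤ q / p := by positivity
  have hsum : 1 / q' + 1 / q = 1 := by
    rw [hq']; field_simp; ring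
  have hmean : (1 / q') * (q' / p') + (1 / q) * (q / p) = 1 := by
    rw [hp', hq']; field_simp; ring
  have key : (q' / p') ^ (1 / q') * (q / p) ^ (1 / q) ≤ 1 := by
    calc (q' / p') ^ (1 / q') * (q / p) ^ (1 / q)
        ≤ (1 / q') * (q' / p') + (1 / q) * (q / p) :=
          Real.geom_mean_le_arith_mean2_weighted hw₁ hw₂ ha hb hsum
      _ = 1 := hmean
  have hpos : 0 < (q' / p') ^ (1 / q') * (q / p) ^ (1 / q) := by positivity
  have hinv : p' / q' = (q' / p')⁻¹ := by rw [inv_div]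
  have hinv2 : p / q = (q / p)⁻¹ := by rw [inv_div]
  rw [hinv, hinv2, Real.inv_rpow ha, Real.inv_rpow hb, ← mul_inv, ge_iff_le,
    le_inv_comm₀ one_pos hpos, inv_one]
  exact key
end

section
/- For all real numbers p, q > 1 with p ≠ q, the strict inequality ((q-1)/q)^(1/q - 1/p) · (p/q)^(1/p) < ((p-1)/p)^(1/q - 1/p) · (p/q)^(1/q) holds. -/
theorem stmt_2 (p q : ℝ) (hp : 1 < p) (hq : 1 < q) (hpq : p ≠ q) :
    ((q - 1) / q) ^ (1 / q - 1 / p) * (p / q) ^ (1 / p) <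
      ((p - 1) / p) ^ (1 / q - 1 / p) * (p / q) ^ (1 / q) := by
  have hp0 : (0:ℝ) < p := by linarith
  have hq0 : (0:ℝ) < q := by linarith
  have hr0 : (0:ℝ) < p / q := by positivity
  set t := 1 / q - 1 / p with ht
  have key : ((q - 1) / q) ^ t < ((p - 1) / q) ^ t := by
    rcases lt_or_gt_of_ne hpq with h | h
    · -- p < q : t < 0, p - 1 < q - 1
      have htneg : t < 0 := by
        rw [ht, sub_neg]
        exact one_div_lt_one_div_of_lt hp0 h
      exact Real.rpow_lt_rpow_of_neg (div_pos (by linarith) hq0)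
        (by gcongr) htneg
    · have htpos : 0 < t := by
        rw [ht, sub_pos]
        exact one_div_lt_one_div_of_lt hq0 h
      exact Real.rpow_lt_rpow (le_of_lt (div_pos (by linarith) hq0))
        (by gcongr) htpos
  have expand : (p / q) ^ (1/q) = (p / q) ^ (1/p) * (p / q) ^ t := by
    rw [← Real.rpow_add hr0, ht]; ring_nf
  have mul : ((p - 1) / p) ^ t * (p / q) ^ t = ((p - 1) / q) ^ t := by
    rw [← Real.mul_rpow (le_of_lt (div_pos (by linarith) hp0)) (le_of_lt hr0)]
    congr 1
    field_simp
  calc ((q - 1) / q) ^ t * (p / q) ^ (1/p)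
      < ((p - 1) / q) ^ t * (p / q) ^ (1/p) := by
        apply mul_lt_mul_of_pos_right key (by positivity)
    _ = ((p - 1) / p) ^ t * (p / q) ^ (1/q) := by
        rw [expand, ← mul]; ring
end

section
/- Let u : (0,∞) → [0,∞) be measurable with distribution function bounded appropriately, and let u* denote its decreasing rearrangement u*(s) = sup{t ≥ 0 : |{u > t}| > s}. Then for every p > 1, ∫₀^∞ t^(p-1) u*(t) dt ≤ ∫₀^∞ t^(p-1) u(t) dt. -/
open MeasureTheory
open scoped ENNReal

/-- Bathtub principle: for a weight monotone on `[0,∞)` and a set `E ⊆ (0,∞)` of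
measure `c`, the integral of the weight over `(0,c)` is at most that over `E`. -/
lemma bathtub_aux {w : ℝ → ℝ≥0∞} (hwm : ∀ a b : ℝ, 0 ≤ a → a ≤ b → w a ≤ w b)
    {E : Set ℝ} (hE : MeasurableSet E) (hE0 : E ⊆ Set.Ioi 0) {c : ℝ} (hc : 0 ≤ c)
    (hvol : volume E = ENNReal.ofReal c) :
    ∫⁻ t in Set.Ioo 0 c, w t ≤ ∫⁻ t in E, w t := by
  set E₁ : Set ℝ := E ∩ Set.Ioo 0 c with hE₁def
  set E₂ : Set ℝ := E \ Set.Ioo 0 c with hE₂def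
  set F : Set ℝ := Set.Ioo 0 c \ E with hFdef
  have hE₁m : MeasurableSet E₁ := hE.inter measurableSet_Ioo
  have hE₂m : MeasurableSet E₂ := hE.diff measurableSet_Ioo
  have hFm : MeasurableSet F := measurableSet_Ioo.diff hE
  have hE₁fin : volume E₁ ≠ ⊤ := by
    refine ne_top_of_le_ne_top ?_ (measure_mono Set.inter_subset_left)
    rw [hvol]; exact ENNReal.ofReal_ne_top
  have hIoo : volume (Set.Ioo (0:ℝ) c) = ENNReal.ofReal c := by
    rw [Real.volume_Ioo, sub_zero]
  -- measure of F equals measure of E₂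
  have hFvol : volume F = ENNReal.ofReal c - volume E₁ := by
    have : F = Set.Ioo 0 c \ E₁ := by
      ext x; simp only [hFdef, hE₁def, Set.mem_diff, Set.mem_inter_iff]; tauto
    rw [this, measure_diff Set.inter_subset_right hE₁m.nullMeasurableSet hE₁fin, hIoo]
  have hE₂vol : volume E₂ = ENNReal.ofReal c - volume E₁ := by
    have : E₂ = E \ E₁ := by
      ext x; simp only [hE₂def, hE₁def, Set.mem_diff, Set.mem_inter_iff]; tauto
    rw [this, measure_diff Set.inter_subset_left hE₁m.nullMeasurableSet hE₁fin, hvol]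
  -- split integrals
  have hsplit1 : ∫⁻ t in Set.Ioo 0 c, w t = (∫⁻ t in E₁, w t) + ∫⁻ t in F, w t := by
    have hu : E₁ ∪ F = Set.Ioo 0 c := by
      ext x; simp only [hE₁def, hFdef, Set.mem_union, Set.mem_diff, Set.mem_inter_iff]; tauto
    rw [← hu, lintegral_union hFm (Set.disjoint_sdiff_right.mono_left Set.inter_subset_left)]
  have hsplit2 : ∫⁻ t in E, w t = (∫⁻ t in E₁, w t) + ∫⁻ t in E₂, w t := by
    have hu : E₁ ∪ E₂ = E := by
      ext x; simp only [hE₁def, hE₂def, Set.mem_union, Set.mem_diff, Set.mem_inter_iff]; tauto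
    rw [← hu, lintegral_union hE₂m (Set.disjoint_sdiff_right.mono_left Set.inter_subset_right)]
  have key : ∫⁻ t in F, w t ≤ ∫⁻ t in E₂, w t := by
    calc ∫⁻ t in F, w t ≤ ∫⁻ _ in F, w c := by
          refine setLIntegral_mono' hFm fun x hx => ?_
          exact hwm x c hx.1.1.le hx.1.2.le
      _ = w c * volume F := setLIntegral_const F (w c)
      _ = w c * volume E₂ := by rw [hFvol, ← hE₂vol]
      _ = ∫⁻ _ in E₂, w c := (setLIntegral_const E₂ (w c)).symm
      _ ≤ ∫⁻ t in E₂, w t := by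
          refine setLIntegral_mono' hE₂m fun x hx => ?_
          have hx0 : 0 < x := hE0 hx.1
          have hcx : c ≤ x := by
            by_contra h
            exact hx.2 ⟨hx0, lt_of_not_ge h⟩
          exact hwm c x hc hcx
  rw [hsplit1, hsplit2]
  exact add_le_add (le_refl _) key

theorem stmt_6 (p : ℝ) (hp : 1 < p)
    (u : ℝ → ℝ) (hmeas : Measurable u) (hnonneg : ∀ t, 0 ≤ u t)
    (hfin : ∀ t > (0:ℝ), volume {x ∈ Set.Ioi (0:ℝ) | t < u x} < ⊤)
    (ustar : ℝ → ℝ)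
    (hustar : ∀ s : ℝ, ustar s =
      sSup {t : ℝ | 0 ≤ t ∧ ENNReal.ofReal s < volume {x ∈ Set.Ioi (0:ℝ) | t < u x}}) :
    (∫⁻ t in Set.Ioi (0:ℝ), ENNReal.ofReal (t ^ (p - 1) * ustar t)) ≤
      ∫⁻ t in Set.Ioi (0:ℝ), ENNReal.ofReal (t ^ (p - 1) * u t) := by
  set m : ℝ → ℝ≥0∞ := fun a => volume {x ∈ Set.Ioi (0:ℝ) | a < u x} with hmdef
  set S : ℝ → Set ℝ := fun t => {a : ℝ | 0 ≤ a ∧ ENNReal.ofReal t < m a} with hSdef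
  have hustar' : ∀ t, ustar t = sSup (S t) := hustar
  have hm_anti : Antitone m := by
    intro a b hab
    exact measure_mono fun x hx => ⟨hx.1, lt_of_le_of_lt hab hx.2⟩
  have hmsetm : ∀ a : ℝ, MeasurableSet {x ∈ Set.Ioi (0:ℝ) | a < u x} := fun a =>
    measurableSet_Ioi.inter (hmeas measurableSet_Ioi)
  -- ustar is nonnegative
  have h0 : ∀ t, 0 ≤ ustar t := by
    intro t; rw [hustar']
    exact Real.sSup_nonneg fun a ha => ha.1
  -- the sets S t are bounded above for t > 0
  have hbdd : ∀ t : ℝ, 0 < t → BddAbove (S t) := by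
    intro t ht
    have hinter : ⋂ n : ℕ, {x ∈ Set.Ioi (0:ℝ) | ((n:ℝ) + 1) < u x} = ∅ := by
      ext x
      simp only [Set.mem_iInter, Set.mem_setOf_eq, Set.mem_empty_iff_false, iff_false,
        not_forall]
      obtain ⟨n, hn⟩ := exists_nat_gt (u x)
      exact ⟨n, fun h => absurd h.2 (not_lt.2 (le_of_lt (lt_of_lt_of_le hn (by linarith))))⟩
    have hdir : Directed (· ⊇ ·) fun n : ℕ => {x ∈ Set.Ioi (0:ℝ) | ((n:ℝ) + 1) < u x} := by
      intro i j
      refine ⟨max i j, fun x hx => ⟨hx.1, lt_of_le_of_lt (by push_cast; simp) hx.2⟩,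
        fun x hx => ⟨hx.1, lt_of_le_of_lt (by push_cast; simp) hx.2⟩⟩
    have hiInf : ⨅ n : ℕ, m ((n:ℝ) + 1) = 0 := by
      have := Directed.measure_iInter (μ := volume)
        (s := fun n : ℕ => {x ∈ Set.Ioi (0:ℝ) | ((n:ℝ) + 1) < u x})
        (fun n => (hmsetm _).nullMeasurableSet) hdir
        ⟨0, by simpa using (hfin 1 one_pos).ne⟩
      rw [hinter] at this
      rw [measure_empty] at this
      exact this.symm
    have : ∃ n : ℕ, m ((n:ℝ) + 1) < ENNReal.ofReal t := by
      refine iInf_lt_iff.mp ?_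
      rw [hiInf]
      exact ENNReal.ofReal_pos.mpr ht
    obtain ⟨n, hn⟩ := this
    refine ⟨(n:ℝ) + 1, fun a ha => ?_⟩
    by_contra h
    have : m a ≤ m ((n:ℝ) + 1) := hm_anti (le_of_not_ge h)
    exact absurd (lt_of_lt_of_le ha.2 this) (not_lt.2 hn.le)
  -- key: s < ustar t ⇒ ofReal t < m s, for s > 0
  have hkey : ∀ s t : ℝ, 0 < s → s < ustar t → ENNReal.ofReal t < m s := by
    intro s t hs h
    rw [hustar'] at h
    have hne : (S t).Nonempty := by
      by_contra hh
      rw [Set.not_nonempty_iff_eq_empty] at hh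
      rw [hh, Real.sSup_empty] at h
      linarith
    obtain ⟨a, ha, hsa⟩ := exists_lt_of_lt_csSup hne h
    exact lt_of_lt_of_le ha.2 (hm_anti hsa.le)
  -- ustar is antitone on (0,∞)
  have hanti : AntitoneOn ustar (Set.Ioi 0) := by
    intro t₁ h₁ t₂ h₂ h12
    rw [hustar', hustar']
    rcases (S t₂).eq_empty_or_nonempty with he | hne
    · rw [he, Real.sSup_empty]
      exact Real.sSup_nonneg fun a ha => ha.1
    · refine csSup_le_csSup (hbdd t₁ h₁) hne fun a ha =>
        ⟨ha.1, lt_of_le_of_lt (ENNReal.ofReal_le_ofReal h12) ha.2⟩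
  -- weighted measure
  set w : ℝ → ℝ≥0∞ := fun t => ENNReal.ofReal (t ^ (p - 1)) with hwdef
  have hw : Measurable w := (measurable_id.pow_const _).ennreal_ofReal
  set ν : Measure ℝ := (volume.restrict (Set.Ioi 0)).withDensity w with hνdef
  have hwfin : ∀ᵐ x ∂(volume.restrict (Set.Ioi (0:ℝ))), w x < ⊤ :=
    Filter.Eventually.of_forall fun x => ENNReal.ofReal_lt_top
  -- step A
  have hA : ∀ f : ℝ → ℝ, (∀ x, 0 ≤ f x) →
      (∫⁻ t in Set.Ioi (0:ℝ), ENNReal.ofReal (t ^ (p - 1) * f t)) =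
        ∫⁻ t, ENNReal.ofReal (f t) ∂ν := by
    intro f hf
    rw [hνdef, lintegral_withDensity_eq_lintegral_mul_non_measurable _ hw hwfin]
    refine setLIntegral_congr_fun measurableSet_Ioi
      (fun x hx => ?_)
    simp only [Pi.mul_apply, hwdef]
    rw [ENNReal.ofReal_mul (Real.rpow_nonneg (le_of_lt hx) _)]
  -- measurability of ustar w.r.t. ν
  have hustarmeas : AEMeasurable ustar ν := by
    have h1 : AEMeasurable ustar (volume.restrict (Set.Ioi (0:ℝ))) :=
      aemeasurable_restrict_of_antitoneOn measurableSet_Ioi hanti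
    exact h1.mono_ac (withDensity_absolutelyContinuous _ _)
  have humeas : AEMeasurable u ν := hmeas.aemeasurable
  -- layercake for both sides
  have hL1 : (∫⁻ t, ENNReal.ofReal (ustar t) ∂ν) =
      ∫⁻ s in Set.Ioi (0:ℝ), ν {a : ℝ | s < ustar a} :=
    lintegral_eq_lintegral_meas_lt ν (Filter.Eventually.of_forall h0) hustarmeas
  have hL2 : (∫⁻ t, ENNReal.ofReal (u t) ∂ν) =
      ∫⁻ s in Set.Ioi (0:ℝ), ν {a : ℝ | s < u a} :=
    lintegral_eq_lintegral_meas_lt ν (Filter.Eventually.of_forall hnonneg) hmeas.aemeasurable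
  rw [hA ustar h0, hA u hnonneg, hL1, hL2]
  -- pointwise comparison of the layer measures
  refine lintegral_mono_ae ((ae_restrict_iff' measurableSet_Ioi).mpr
    (Filter.Eventually.of_forall fun s hs => ?_))
  have hs : (0:ℝ) < s := hs
  have hmfin : m s ≠ ⊤ := (hfin s hs).ne
  set c : ℝ := (m s).toReal with hcdef
  have hc : 0 ≤ c := ENNReal.toReal_nonneg
  have hcvol : ENNReal.ofReal c = m s := ENNReal.ofReal_toReal hmfin
  -- the weight is monotone on [0,∞)
  have hwm : ∀ a b : ℝ, 0 ≤ a → a ≤ b → w a ≤ w b := fun a b ha hab =>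
    ENNReal.ofReal_le_ofReal (Real.rpow_le_rpow ha hab (by linarith))
  -- ν of sets
  have hνapply : ∀ B : Set ℝ, MeasurableSet B → ν B = ∫⁻ t in B ∩ Set.Ioi 0, w t := by
    intro B hB
    rw [hνdef, withDensity_apply _ hB, Measure.restrict_restrict hB]
  have hνIic : ν (Set.Iic (0:ℝ)) = 0 := by
    refine withDensity_absolutelyContinuous _ _ ?_
    rw [Measure.restrict_apply measurableSet_Iic]
    simp [Set.Iic_inter_Ioi]
  -- step 1 : {s < ustar} ⊆ Ioo 0 c ∪ Iic 0
  have hsub : {a : ℝ | s < ustar a} ⊆ Set.Ioo 0 c ∪ Set.Iic 0 := by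
    intro a ha
    rcases le_or_gt a 0 with h | h
    · exact Or.inr h
    · refine Or.inl ⟨h, ?_⟩
      have := hkey s a hs ha
      rw [← hcvol] at this
      exact (ENNReal.ofReal_lt_ofReal_iff_of_nonneg h.le).mp this
  set E : Set ℝ := {x ∈ Set.Ioi (0:ℝ) | s < u x} with hEdef
  have hEm : MeasurableSet E := hmsetm s
  have hE0 : E ⊆ Set.Ioi 0 := fun x hx => hx.1
  have hEvol : volume E = ENNReal.ofReal c := by rw [hcvol]
  calc ν {a : ℝ | s < ustar a}
      ≤ ν (Set.Ioo 0 c ∪ Set.Iic 0) := measure_mono hsub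
    _ ≤ ν (Set.Ioo 0 c) + ν (Set.Iic 0) := measure_union_le _ _
    _ = ν (Set.Ioo 0 c) := by rw [hνIic, add_zero]
    _ = ∫⁻ t in Set.Ioo 0 c, w t := by
        rw [hνapply _ measurableSet_Ioo,
          Set.inter_eq_left.mpr (fun x hx => hx.1)]
    _ ≤ ∫⁻ t in E, w t := bathtub_aux hwm hEm hE0 hc hEvol
    _ = ν E := by
        rw [hνapply _ hEm, Set.inter_eq_left.mpr hE0]
    _ ≤ ν {a : ℝ | s < u a} := measure_mono fun x hx => hx.2
end

section
/- Let p, q > 1 with p ≠ q and 0 < δ < 1. Then (⨍_{1-δ}^1 τ^p dτ)(⨍_{1-δ}^1 τ^{q-1} dτ) - (⨍_{1-δ}^1 τ^q dτ)(⨍_{1-δ}^1 τ^{p-1} dτ) ≠ 0, where ⨍ denotes the average integral (1/δ)∫. -/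
open intervalIntegral Set

private lemma aux_le (p q : ℝ) (hqp : q < p) {σ τ : ℝ} (hσ : 0 < σ) (hστ : σ ≤ τ) :
    τ ^ (q - 1) * σ ^ (p - 1) ≤ τ ^ (p - 1) * σ ^ (q - 1) := by
  have hτ : 0 < τ := lt_of_lt_of_le hσ hστ
  have h1 : τ ^ (p - 1) = τ ^ (q - 1) * τ ^ (p - q) := by
    rw [← Real.rpow_add hτ]; ring_nf
  have h2 : σ ^ (p - 1) = σ ^ (q - 1) * σ ^ (p - q) := by
    rw [← Real.rpow_add hσ]; ring_nf
  rw [h1, h2]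
  have h3 : σ ^ (p - q) ≤ τ ^ (p - q) := Real.rpow_le_rpow hσ.le hστ (by linarith)
  have p1 := (Real.rpow_pos_of_pos hτ (q - 1)).le
  have p2 := (Real.rpow_pos_of_pos hσ (q - 1)).le
  nlinarith [mul_le_mul_of_nonneg_left h3 (mul_nonneg p1 p2)]

private lemma aux_lt (p q : ℝ) (hqp : q < p) {σ τ : ℝ} (hσ : 0 < σ) (hστ : σ < τ) :
    τ ^ (q - 1) * σ ^ (p - 1) < τ ^ (p - 1) * σ ^ (q - 1) := by
  have hτ : 0 < τ := lt_trans hσ hστ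
  have h1 : τ ^ (p - 1) = τ ^ (q - 1) * τ ^ (p - q) := by
    rw [← Real.rpow_add hτ]; ring_nf
  have h2 : σ ^ (p - 1) = σ ^ (q - 1) * σ ^ (p - q) := by
    rw [← Real.rpow_add hσ]; ring_nf
  rw [h1, h2]
  have h3 : σ ^ (p - q) < τ ^ (p - q) := Real.rpow_lt_rpow hσ.le hστ (by linarith)
  have p1 := Real.rpow_pos_of_pos hτ (q - 1)
  have p2 := Real.rpow_pos_of_pos hσ (q - 1)
  nlinarith [mul_lt_mul_of_pos_left h3 (mul_pos p1 p2)]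

/-- nonnegativity of the symmetrized integrand -/
private lemma g_nonneg (p q : ℝ) (hqp : q < p) {σ τ : ℝ} (hσ : 0 < σ) (hτ : 0 < τ) :
    0 ≤ (τ - σ) * (τ ^ (p - 1) * σ ^ (q - 1) - τ ^ (q - 1) * σ ^ (p - 1)) := by
  rcases le_total σ τ with h | h
  · have := aux_le p q hqp hσ h
    nlinarith
  · have := aux_le p q hqp hτ h
    nlinarith

private lemma g_pos (p q : ℝ) (hqp : q < p) {σ τ : ℝ} (hσ : 0 < σ) (hτσ : τ < σ) (hτ : 0 < τ) :
    0 < (τ - σ) * (τ ^ (p - 1) * σ ^ (q - 1) - τ ^ (q - 1) * σ ^ (p - 1)) := by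
  have := aux_lt p q hqp hτ hτσ
  nlinarith

private lemma key (p q a : ℝ) (hp : 1 < p) (hq : 1 < q) (hqp : q < p)
    (ha0 : 0 < a) (ha1 : a < 1) :
    0 < (∫ τ in a..1, τ ^ p) * (∫ τ in a..1, τ ^ (q - 1)) -
        (∫ τ in a..1, τ ^ q) * (∫ τ in a..1, τ ^ (p - 1)) := by
  have hint : ∀ r : ℝ, 0 < r → ∀ c d : ℝ, IntervalIntegrable (fun x => x ^ r)
      MeasureTheory.volume c d := fun r hr c d => intervalIntegrable_rpow' (by linarith)
  set Ap : ℝ := ∫ τ in a..1, τ ^ p with hAp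
  set Aq : ℝ := ∫ τ in a..1, τ ^ q with hAq
  set Ap1 : ℝ := ∫ τ in a..1, τ ^ (p - 1) with hAp1
  set Aq1 : ℝ := ∫ τ in a..1, τ ^ (q - 1) with hAq1
  have hp0 : (0:ℝ) < p := by linarith
  have hq0 : (0:ℝ) < q := by linarith
  have hp10 : (0:ℝ) < p - 1 := by linarith
  have hq10 : (0:ℝ) < q - 1 := by linarith
  -- the function h τ = inner integral
  set h : ℝ → ℝ := fun τ => τ ^ p * Aq1 - τ ^ q * Ap1 - τ ^ (p - 1) * Aq + τ ^ (q - 1) * Ap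
    with hh
  -- h is the inner integral of g
  have inner : ∀ τ : ℝ, 0 < τ → ∀ c d : ℝ, a ≤ c → c ≤ 1 → a ≤ d → d ≤ 1 →
      (∫ σ in c..d, (τ - σ) * (τ ^ (p - 1) * σ ^ (q - 1) - τ ^ (q - 1) * σ ^ (p - 1))) =
      τ ^ p * (∫ σ in c..d, σ ^ (q - 1)) - τ ^ q * (∫ σ in c..d, σ ^ (p - 1))
        - τ ^ (p - 1) * (∫ σ in c..d, σ ^ q) + τ ^ (q - 1) * (∫ σ in c..d, σ ^ p) := by
    intro τ hτ c d hac hc1 had hd1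
    have hrw : EqOn (fun σ : ℝ => (τ - σ) * (τ ^ (p - 1) * σ ^ (q - 1) - τ ^ (q - 1) * σ ^ (p - 1)))
        (fun σ : ℝ => τ ^ p * σ ^ (q - 1) - τ ^ q * σ ^ (p - 1)
          - τ ^ (p - 1) * σ ^ q + τ ^ (q - 1) * σ ^ p) (uIcc c d) := by
      intro σ hσmem
      have hσ : 0 < σ := by
        have : a ≤ σ := le_trans (le_min hac had) hσmem.1
        linarith
      simp only
      have e1 : τ ^ p = τ * τ ^ (p - 1) := by
        rw [show p = 1 + (p - 1) by ring, Real.rpow_add hτ, Real.rpow_one]; ring_nf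
      have e2 : τ ^ q = τ * τ ^ (q - 1) := by
        rw [show q = 1 + (q - 1) by ring, Real.rpow_add hτ, Real.rpow_one]; ring_nf
      have e3 : σ ^ p = σ * σ ^ (p - 1) := by
        rw [show p = 1 + (p - 1) by ring, Real.rpow_add hσ, Real.rpow_one]; ring_nf
      have e4 : σ ^ q = σ * σ ^ (q - 1) := by
        rw [show q = 1 + (q - 1) by ring, Real.rpow_add hσ, Real.rpow_one]; ring_nf
      rw [e1, e2, e3, e4]; ring
    rw [intervalIntegral.integral_congr hrw]
    have i1 := (hint (q-1) hq10 c d).const_mul (τ ^ p)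
    have i2 := (hint (p-1) hp10 c d).const_mul (τ ^ q)
    have i3 := (hint q hq0 c d).const_mul (τ ^ (p-1))
    have i4 := (hint p hp0 c d).const_mul (τ ^ (q-1))
    rw [intervalIntegral.integral_add ((i1.sub i2).sub i3) i4,
      intervalIntegral.integral_sub (i1.sub i2) i3, intervalIntegral.integral_sub i1 i2,
      intervalIntegral.integral_const_mul, intervalIntegral.integral_const_mul,
      intervalIntegral.integral_const_mul, intervalIntegral.integral_const_mul]
  -- continuity of rpow with positive exponent
  have cont : ∀ r : ℝ, 0 < r → Continuous fun x : ℝ => x ^ r := by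
    intro r hr
    exact continuous_iff_continuousAt.2 fun x => Real.continuousAt_rpow_const x r (Or.inr hr.le)
  -- h is positive on Ioo a 1
  have hpos : ∀ τ ∈ Ioo a 1, 0 < h τ := by
    intro τ hτm
    have hτ : 0 < τ := lt_trans ha0 hτm.1
    have hgc : ∀ c d : ℝ, IntervalIntegrable
        (fun σ => (τ - σ) * (τ ^ (p - 1) * σ ^ (q - 1) - τ ^ (q - 1) * σ ^ (p - 1)))
        MeasureTheory.volume c d := by
      intro c d
      exact ((continuous_const.sub continuous_id).mul
        ((continuous_const.mul (cont (q-1) hq10)).sub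
          (continuous_const.mul (cont (p-1) hp10)))).intervalIntegrable c d
    have split := integral_add_adjacent_intervals (hgc a τ) (hgc τ 1)
    have n1 : 0 ≤ ∫ σ in a..τ,
        (τ - σ) * (τ ^ (p - 1) * σ ^ (q - 1) - τ ^ (q - 1) * σ ^ (p - 1)) :=
      integral_nonneg hτm.1.le fun u hu => g_nonneg p q hqp (by linarith [hu.1]) hτ
    have n2 : 0 < ∫ σ in τ..1,
        (τ - σ) * (τ ^ (p - 1) * σ ^ (q - 1) - τ ^ (q - 1) * σ ^ (p - 1)) :=
      intervalIntegral_pos_of_pos_on (hgc τ 1)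
        (fun σ hσ => g_pos p q hqp (lt_trans hτ hσ.1) hσ.1 hτ) hτm.2
    have e2 : h τ = ∫ σ in a..1,
        (τ - σ) * (τ ^ (p - 1) * σ ^ (q - 1) - τ ^ (q - 1) * σ ^ (p - 1)) := by
      rw [inner τ hτ a 1 le_rfl ha1.le ha1.le le_rfl, hh, ← hAp, ← hAq, ← hAp1, ← hAq1]
    rw [e2, ← split]
    linarith
  -- h is interval integrable
  have hint_h : IntervalIntegrable h MeasureTheory.volume a 1 := by
    have i1 := (hint p hp0 a 1).mul_const Aq1
    have i2 := (hint q hq0 a 1).mul_const Ap1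
    have i3 := (hint (p-1) hp10 a 1).mul_const Aq
    have i4 := (hint (q-1) hq10 a 1).mul_const Ap
    exact ((i1.sub i2).sub i3).add i4
  have hpos_int : 0 < ∫ τ in a..1, h τ :=
    intervalIntegral_pos_of_pos_on hint_h hpos ha1
  have hval : ∫ τ in a..1, h τ = Ap * Aq1 - Aq * Ap1 - Ap1 * Aq + Aq1 * Ap := by
    have i1 := (hint p hp0 a 1).mul_const Aq1
    have i2 := (hint q hq0 a 1).mul_const Ap1
    have i3 := (hint (p-1) hp10 a 1).mul_const Aq
    have i4 := (hint (q-1) hq10 a 1).mul_const Ap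
    simp only [hh]
    rw [intervalIntegral.integral_add ((i1.sub i2).sub i3) i4,
      intervalIntegral.integral_sub (i1.sub i2) i3, intervalIntegral.integral_sub i1 i2,
      intervalIntegral.integral_mul_const, intervalIntegral.integral_mul_const,
      intervalIntegral.integral_mul_const, intervalIntegral.integral_mul_const,
      ← hAp, ← hAq, ← hAp1, ← hAq1]
  rw [hval] at hpos_int
  nlinarith [hpos_int]

theorem stmt_11 (p q δ : ℝ) (hp : 1 < p) (hq : 1 < q) (hpq : p ≠ q)
    (hδ0 : 0 < δ) (hδ1 : δ < 1) :
    ((1 / δ) * ∫ τ in (1 - δ)..1, τ ^ p) * ((1 / δ) * ∫ τ in (1 - δ)..1, τ ^ (q - 1)) -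
      ((1 / δ) * ∫ τ in (1 - δ)..1, τ ^ q) * ((1 / δ) * ∫ τ in (1 - δ)..1, τ ^ (p - 1)) ≠ 0 := by
  have ha0 : (0:ℝ) < 1 - δ := by linarith
  have ha1 : (1:ℝ) - δ < 1 := by linarith
  have hδ : (0:ℝ) < 1 / δ := by positivity
  rcases hpq.lt_or_gt with hlt | hlt
  · have hk := key q p (1 - δ) hq hp hlt ha0 ha1
    have : ((1 / δ) * ∫ τ in (1 - δ)..1, τ ^ p) * ((1 / δ) * ∫ τ in (1 - δ)..1, τ ^ (q - 1)) -
      ((1 / δ) * ∫ τ in (1 - δ)..1, τ ^ q) * ((1 / δ) * ∫ τ in (1 - δ)..1, τ ^ (p - 1))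
        = (1/δ)^2 * ((∫ τ in (1 - δ)..1, τ ^ p) * (∫ τ in (1 - δ)..1, τ ^ (q - 1)) -
          (∫ τ in (1 - δ)..1, τ ^ q) * (∫ τ in (1 - δ)..1, τ ^ (p - 1))) := by ring
    rw [this]
    apply ne_of_lt
    have h2 : (0:ℝ) < (1/δ)^2 := by positivity
    nlinarith
  · have hk := key p q (1 - δ) hp hq hlt ha0 ha1
    have : ((1 / δ) * ∫ τ in (1 - δ)..1, τ ^ p) * ((1 / δ) * ∫ τ in (1 - δ)..1, τ ^ (q - 1)) -
      ((1 / δ) * ∫ τ in (1 - δ)..1, τ ^ q) * ((1 / δ) * ∫ τ in (1 - δ)..1, τ ^ (p - 1))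
        = (1/δ)^2 * ((∫ τ in (1 - δ)..1, τ ^ p) * (∫ τ in (1 - δ)..1, τ ^ (q - 1)) -
          (∫ τ in (1 - δ)..1, τ ^ q) * (∫ τ in (1 - δ)..1, τ ^ (p - 1))) := by ring
    rw [this]
    apply ne_of_gt
    have h2 : (0:ℝ) < (1/δ)^2 := by positivity
    nlinarith
end

section
/- Let p > 1, d ≥ 1 an integer, and c > 0. Define u(t) = (1/d!)·[max(-log((c t)^(p-1)), 0)]^d for t > 0. Then p ∫₀^∞ t^{p-1} u(t) dt = ((p-1)/p)^d / c^p. -/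
open MeasureTheory Set Real

theorem stmt_13 (p c : ℝ) (hp : 1 < p) (hc : 0 < c) (d : ℕ) (hd : 1 ≤ d)
    (u : ℝ → ℝ)
    (hu : ∀ t > (0:ℝ), u t =
      (1 / (d.factorial : ℝ)) * (max (-Real.log ((c * t) ^ (p - 1))) 0) ^ d) :
    p * ∫ t in Set.Ioi (0:ℝ), t ^ (p - 1) * u t = ((p - 1) / p) ^ d / c ^ p := by
  have hp0 : (0:ℝ) < p := lt_trans one_pos hp
  have hp1 : (0:ℝ) < p - 1 := sub_pos.mpr hp
  have hdf : (0:ℝ) < (d.factorial : ℝ) := by exact_mod_cast d.factorial_pos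
  have hd0 : d ≠ 0 := Nat.one_le_iff_ne_zero.mp hd
  have hcp : (0:ℝ) < c ^ p := Real.rpow_pos_of_pos hc p
  set f : ℝ → ℝ := fun x => Real.exp (-x / p) / c with hfdef
  set f' : ℝ → ℝ := fun x => -(Real.exp (-x / p) / (c * p)) with hf'def
  -- Step 1: restrict integral to Ioo 0 (1/c)
  have hre : (∫ t in Set.Ioi (0:ℝ), t ^ (p - 1) * u t)
      = ∫ t in Set.Ioo (0:ℝ) (1/c), t ^ (p - 1) * u t := by
    rw [← MeasureTheory.integral_indicator measurableSet_Ioi,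
        ← MeasureTheory.integral_indicator measurableSet_Ioo]
    congr 1
    funext t
    by_cases ht : t ∈ Set.Ioo (0:ℝ) (1/c)
    · rw [Set.indicator_of_mem ht, Set.indicator_of_mem (show t ∈ Set.Ioi (0:ℝ) from ht.1)]
    · rw [Set.indicator_of_notMem ht]
      by_cases ht0 : t ∈ Set.Ioi (0:ℝ)
      · rw [Set.indicator_of_mem ht0]
        have h1c : 1/c ≤ t := by
          by_contra h
          exact ht ⟨ht0, lt_of_not_ge h⟩
        have hct : 1 ≤ c * t := by
          rw [div_le_iff₀ hc] at h1c
          linarith [h1c]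
        have hlog : 0 ≤ Real.log ((c*t)^(p-1)) := by
          rw [Real.log_rpow (by linarith : (0:ℝ) < c * t)]
          exact mul_nonneg (le_of_lt hp1) (Real.log_nonneg hct)
        have : u t = 0 := by
          rw [hu t ht0, max_eq_right (neg_nonpos.mpr hlog), zero_pow hd0, mul_zero]
        simp [this]
      · rw [Set.indicator_of_notMem ht0]
  -- Step 2: image
  have himg : f '' Set.Ioi 0 = Set.Ioo (0:ℝ) (1/c) := by
    ext y
    constructor
    · rintro ⟨x, hx, rfl⟩
      refine ⟨by positivity, ?_⟩
      rw [div_lt_div_iff_of_pos_right hc]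
      have : -x / p < 0 := by
        apply div_neg_of_neg_of_pos _ hp0
        simpa using hx
      calc Real.exp (-x/p) < Real.exp 0 := Real.exp_lt_exp.mpr this
        _ = 1 := Real.exp_zero
    · rintro ⟨hy1, hy2⟩
      have hcy1 : c * y < 1 := by
        rw [lt_div_iff₀ hc] at hy2
        linarith [hy2]
      have hcy0 : 0 < c * y := by positivity
      refine ⟨-p * Real.log (c*y), ?_, ?_⟩
      · have hlog : Real.log (c*y) < 0 := Real.log_neg hcy0 hcy1
        simp only [Set.mem_Ioi]
        nlinarith
      · show Real.exp (-(-p * Real.log (c*y)) / p) / c = y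
        rw [show -(-p * Real.log (c*y)) / p = Real.log (c*y) by field_simp,
          Real.exp_log hcy0]
        field_simp
  -- Step 3: derivative and injectivity
  have hderiv : ∀ x ∈ Set.Ioi (0:ℝ), HasDerivWithinAt f (f' x) (Set.Ioi 0) x := by
    intro x hx
    have h1 : HasDerivAt (fun x : ℝ => -x / p) (-1/p) x := by
      simpa using ((hasDerivAt_id x).neg.div_const p)
    have h2 := (Real.hasDerivAt_exp (-x/p)).comp x h1
    have h3 := h2.div_const c
    have : Real.exp (-x/p) * (-1/p) / c = f' x := by
      simp only [hf'def]
      field_simp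
    rw [← this]
    exact h3.hasDerivWithinAt
  have hinj : Set.InjOn f (Set.Ioi 0) := by
    intro a _ b _ hab
    replace hab : a = b ∨ p = 0 := Or.inl (by
      have h := hab
      simp only [hfdef] at h
      have h2 := Real.exp_injective ((div_left_inj' hc.ne').mp h)
      rw [div_left_inj' hp0.ne', neg_inj] at h2
      exact h2)
    rcases hab with h | h
    · exact h
    · exact absurd h hp0.ne'
  -- Step 4: change of variables
  rw [hre, ← himg,
    MeasureTheory.integral_image_eq_integral_abs_deriv_smul measurableSet_Ioi hderiv hinj]
  -- Step 5: simplify integrand on Ioi 0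
  have hcong : ∀ x ∈ Set.Ioi (0:ℝ),
      |f' x| • ((f x) ^ (p - 1) * u (f x))
        = (((p - 1) / p) ^ d / (c ^ p * p * (d.factorial : ℝ)))
            * (Real.exp (-x) * x ^ d) := by
    intro x hx
    have hx0 : (0:ℝ) < x := hx
    have hfx : 0 < f x := by positivity
    have hcf : c * f x = Real.exp (-x / p) := by
      simp only [hfdef]
      field_simp
    have habs : |f' x| = Real.exp (-x/p) / (c * p) := by
      simp only [hf'def, abs_neg]
      rw [abs_of_pos (by positivity)]
    have hufx : u (f x) = (1 / (d.factorial : ℝ)) * (((p-1)/p) ^ d * x ^ d) := by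
      rw [hu (f x) hfx, hcf, Real.log_rpow (Real.exp_pos _), Real.log_exp]
      have h0 : -((p - 1) * (-x / p)) = (p-1)/p * x := by field_simp
      have hmax : max (-((p - 1) * (-x / p))) 0 = (p-1)/p * x := by
        rw [h0, max_eq_left (by positivity)]
      rw [hmax, mul_pow]
    have hfpow : (f x) ^ (p - 1) = Real.exp (-x/p * (p-1)) / c ^ (p-1) := by
      simp only [hfdef]
      rw [Real.div_rpow (Real.exp_pos _).le hc.le, Real.exp_mul]
    rw [smul_eq_mul, habs, hfpow, hufx]
    have hexp : Real.exp (-x/p) * Real.exp (-x/p * (p-1)) = Real.exp (-x) := by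
      rw [← Real.exp_add]
      congr 1
      field_simp
      ring
    have hcc : c ^ (p-1) * c = c ^ p := by
      rw [← Real.rpow_add_one hc.ne' (p-1)]
      norm_num
    rw [show Real.exp (-x/p) / (c*p) * (Real.exp (-x/p*(p-1)) / c^(p-1)
          * (1/(d.factorial:ℝ) * (((p-1)/p)^d * x^d)))
        = (Real.exp (-x/p) * Real.exp (-x/p*(p-1))) * (((p-1)/p)^d * x^d)
            / ((c^(p-1)*c) * p * (d.factorial:ℝ)) by ring, hexp, hcc]
    ring
  rw [MeasureTheory.setIntegral_congr_fun measurableSet_Ioi hcong,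
    MeasureTheory.integral_const_mul]
  -- Step 6: Gamma integral
  have hkey : (∫ x in Set.Ioi (0:ℝ), Real.exp (-x) * x ^ d) = (d.factorial : ℝ) := by
    have h1 := Real.Gamma_eq_integral (s := (d:ℝ) + 1) (by positivity)
    rw [Real.Gamma_nat_eq_factorial] at h1
    simp only [show ((d:ℝ) + 1 - 1) = (d:ℝ) by ring, Real.rpow_natCast] at h1
    exact h1.symm
  rw [hkey]
  field_simp
end

section
/- Let p > 1, d ≥ 1, and 𝒞 be the set of decreasing functions u : (0,∞) → [0,∞) with p∫₀^∞ t^{p-1}u(t)dt ≤ A^p and q∫₀^∞ t^{q-1}u(t)dt ≤ B^q (for fixed q > 1, A, B > 0). Then the supremum over u ∈ 𝒞 of I(u) = ∫₀^∞ G(u(t)) dt, with G(s) = ∫₀ˢ e^{-(d!τ)^{1/d}} dτ, is finite and is attained by some u ∈ 𝒞. -/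
open MeasureTheory Set Filter Topology
open scoped ENNReal NNReal

private lemma myexp_cont (d : ℕ) (hd : 1 ≤ d) :
    Continuous (fun τ : ℝ => Real.exp (-((d.factorial * τ : ℝ) ^ ((d:ℝ)⁻¹)))) := by
  have hpos : (0:ℝ) < (d:ℝ)⁻¹ := by
    have : (0:ℝ) < (d:ℝ) := by exact_mod_cast Nat.lt_of_lt_of_le Nat.zero_lt_one hd
    positivity
  have h1 : Continuous (fun τ : ℝ => ((d.factorial * τ : ℝ) ^ ((d:ℝ)⁻¹))) := by
    apply continuous_iff_continuousAt.2
    intro x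
    exact (Real.continuousAt_rpow_const _ _ (Or.inr hpos.le)).comp
      ((continuous_const.mul continuous_id).continuousAt)
  exact Real.continuous_exp.comp h1.neg

private lemma myG_cont (d : ℕ) (hd : 1 ≤ d) (G : ℝ → ℝ)
    (hG : ∀ s : ℝ, G s = ∫ τ in (0:ℝ)..s, Real.exp (-((d.factorial * τ) ^ ((d:ℝ)⁻¹)))) :
    Continuous G := by
  have := intervalIntegral.continuous_primitive (μ := volume)
    (fun a b => ((myexp_cont d hd).intervalIntegrable a b)) 0
  have heq : G = fun s => ∫ τ in (0:ℝ)..s, Real.exp (-((d.factorial * τ) ^ ((d:ℝ)⁻¹))) :=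
    funext hG
  rw [heq]; exact this

private lemma myG_le_self (d : ℕ) (hd : 1 ≤ d) (G : ℝ → ℝ)
    (hG : ∀ s : ℝ, G s = ∫ τ in (0:ℝ)..s, Real.exp (-((d.factorial * τ) ^ ((d:ℝ)⁻¹))))
    {s : ℝ} (hs : 0 ≤ s) : G s ≤ s := by
  rw [hG]
  calc ∫ τ in (0:ℝ)..s, Real.exp (-((d.factorial * τ) ^ ((d:ℝ)⁻¹)))
      ≤ ∫ _ in (0:ℝ)..s, (1:ℝ) := by
        apply intervalIntegral.integral_mono_on hs
          ((myexp_cont d hd).intervalIntegrable 0 s) (intervalIntegrable_const)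
        intro τ hτ
        rw [Real.exp_le_one_iff, neg_nonpos]
        apply Real.rpow_nonneg
        have : (0:ℝ) ≤ τ := hτ.1
        positivity
    _ = s := by simp

private lemma myexp_le (d : ℕ) (hd : 1 ≤ d) {τ : ℝ} (hτ : 1 ≤ τ) :
    Real.exp (-((d.factorial * τ : ℝ) ^ ((d:ℝ)⁻¹))) ≤ (2*d).factorial / τ^2 := by
  have hdr : (0:ℝ) < (d:ℝ) := by exact_mod_cast Nat.lt_of_lt_of_le Nat.zero_lt_one hd
  have hfac : (1:ℝ) ≤ (d.factorial : ℝ) := by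
    exact_mod_cast Nat.one_le_iff_ne_zero.2 d.factorial_ne_zero
  have hbase : (1:ℝ) ≤ (d.factorial : ℝ) * τ := by nlinarith
  set x : ℝ := (d.factorial * τ : ℝ) ^ ((d:ℝ)⁻¹) with hx
  have hx1 : (1:ℝ) ≤ x := Real.one_le_rpow hbase (by positivity)
  have hpow : x ^ (2*d) = ((d.factorial:ℝ) * τ)^2 := by
    rw [hx, ← Real.rpow_natCast (((d.factorial:ℝ) * τ) ^ ((d:ℝ)⁻¹)) (2*d),
      ← Real.rpow_mul (by linarith)]
    rw [show (d:ℝ)⁻¹ * ((2*d : ℕ) : ℝ) = 2 by push_cast; field_simp]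
    rw [Real.rpow_two]
  have hexp : x ^ (2*d) / ((2*d).factorial : ℝ) ≤ Real.exp x :=
    Real.pow_div_factorial_le_exp (x := x) (by linarith) (2*d)
  have hfpos : (0:ℝ) < ((2*d).factorial : ℝ) := by exact_mod_cast (2*d).factorial_pos
  have hxpos : (0:ℝ) < x ^ (2*d) := by positivity
  have h1 : Real.exp (-x) ≤ ((2*d).factorial : ℝ) / x ^ (2*d) := by
    rw [Real.exp_neg, div_eq_mul_inv]
    have h2 : x ^ (2*d) / ((2*d).factorial : ℝ) ≤ Real.exp x := hexp
    have := Real.exp_pos x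
    rw [div_le_iff₀ hfpos] at h2
    calc (Real.exp x)⁻¹ ≤ ((2*d).factorial : ℝ) * (x ^ (2*d))⁻¹ := by
          rw [inv_le_iff_one_le_mul₀ this]
          calc (1:ℝ) = x ^ (2*d) * (x ^ (2*d))⁻¹ := by field_simp
            _ ≤ Real.exp x * ((2*d).factorial : ℝ) * (x ^ (2*d))⁻¹ := by
                apply mul_le_mul_of_nonneg_right (by nlinarith) (by positivity)
            _ = ((2*d).factorial : ℝ) * (x ^ (2*d))⁻¹ * Real.exp x := by ring
      _ = ((2*d).factorial : ℝ) * (x ^ (2*d))⁻¹ := rfl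
  calc Real.exp (-x) ≤ ((2*d).factorial : ℝ) / x ^ (2*d) := h1
    _ = ((2*d).factorial : ℝ) / ((d.factorial:ℝ) * τ)^2 := by rw [hpow]
    _ ≤ ((2*d).factorial : ℝ) / τ^2 := by
        apply div_le_div_of_nonneg_left (le_of_lt hfpos) (by positivity)
        nlinarith [sq_nonneg τ, hfac, sq_nonneg ((d.factorial:ℝ)*τ - τ)]

private lemma myG_le_bound (d : ℕ) (hd : 1 ≤ d) (G : ℝ → ℝ)
    (hG : ∀ s : ℝ, G s = ∫ τ in (0:ℝ)..s, Real.exp (-((d.factorial * τ) ^ ((d:ℝ)⁻¹))))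
    {s : ℝ} (hs : 0 ≤ s) : G s ≤ 1 + ((2*d).factorial : ℝ) := by
  have hfpos : (0:ℝ) < ((2*d).factorial : ℝ) := by exact_mod_cast (2*d).factorial_pos
  rcases le_or_gt s 1 with h | h
  · have := myG_le_self d hd G hG hs
    linarith
  · have h0 : (0:ℝ) ∉ Set.uIcc (1:ℝ) s := by
      rw [Set.uIcc_of_le h.le]
      simp only [Set.mem_Icc, not_and]
      intro h1; linarith
    have hcont : ContinuousOn (fun τ : ℝ => ((2*d).factorial : ℝ)/τ^2) (Set.uIcc (1:ℝ) s) := by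
      apply continuousOn_const.div (continuous_pow 2).continuousOn
      intro τ hτ
      rw [Set.uIcc_of_le h.le] at hτ
      have : (1:ℝ) ≤ τ := hτ.1
      positivity
    have hint2 : IntervalIntegrable (fun τ : ℝ => ((2*d).factorial : ℝ)/τ^2) volume 1 s :=
      ContinuousOn.intervalIntegrable (μ := volume) hcont
    have hi1 : IntervalIntegrable (fun τ : ℝ => Real.exp (-((d.factorial * τ) ^ ((d:ℝ)⁻¹)))) volume 0 1 := (myexp_cont d hd).intervalIntegrable 0 1
    have hi2 : IntervalIntegrable (fun τ : ℝ => Real.exp (-((d.factorial * τ) ^ ((d:ℝ)⁻¹)))) volume 1 s := (myexp_cont d hd).intervalIntegrable 1 s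
    have hsplit := intervalIntegral.integral_add_adjacent_intervals hi1 hi2
    rw [hG]
    rw [← hsplit]
    have h1 : (∫ τ in (0:ℝ)..1, Real.exp (-((d.factorial * τ) ^ ((d:ℝ)⁻¹)))) ≤ 1 := by
      have := myG_le_self d hd G hG (zero_le_one)
      rwa [hG 1] at this
    have h2 : (∫ τ in (1:ℝ)..s, Real.exp (-((d.factorial * τ) ^ ((d:ℝ)⁻¹))))
        ≤ ∫ τ in (1:ℝ)..s, ((2*d).factorial : ℝ)/τ^2 := by
      apply intervalIntegral.integral_mono_on h.le
        ((myexp_cont d hd).intervalIntegrable 1 s) hint2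
      intro τ hτ
      exact myexp_le d hd hτ.1
    have hval : (∫ τ in (1:ℝ)..s, ((2*d).factorial : ℝ)/τ^2)
        = ((2*d).factorial : ℝ) * (1 - s⁻¹) := by
      simp only [div_eq_mul_inv]
      rw [intervalIntegral.integral_const_mul]
      have heq : (fun τ:ℝ => (τ^2)⁻¹) = (fun τ:ℝ => τ^(-2:ℤ)) := by
        funext τ; simp [zpow_neg, zpow_two, pow_two]
      rw [show (∫ τ in (1:ℝ)..s, (τ^2)⁻¹) = ∫ τ in (1:ℝ)..s, τ^(-2:ℤ) by rw [heq]]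
      rw [integral_zpow (Or.inr ⟨by norm_num, h0⟩)]
      norm_num
      exact Or.inl (by ring)
    have hs' : ((2*d).factorial : ℝ) * (1 - s⁻¹) ≤ ((2*d).factorial : ℝ) := by
      have : (0:ℝ) < s⁻¹ := by positivity
      nlinarith
    linarith

private lemma myhelly (h : ℕ → ℝ → ℝ) (E : ℝ → ℝ) (hE : Antitone E)
    (hanti : ∀ n, Antitone (h n)) (hbd : ∀ n x, h n x ∈ Set.Icc 0 (E x)) :
    ∃ φ : ℕ → ℕ, StrictMono φ ∧ ∃ w : ℝ → ℝ, Antitone w ∧ (∀ x, 0 ≤ w x) ∧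
      ∃ N : Set ℝ, N.Countable ∧
        ∀ x ∉ N, Tendsto (fun k => h (φ k) x) atTop (𝓝 (w x)) := by
  classical
  set s : Set (ℚ → ℝ) := Set.univ.pi (fun r : ℚ => Set.Icc 0 (E r)) with hsdef
  have hcomp : IsCompact s := isCompact_univ_pi (fun r => isCompact_Icc)
  have hmem : ∀ n, (fun r : ℚ => h n r) ∈ s := by
    intro n
    rw [hsdef, Set.mem_univ_pi]
    intro r
    exact hbd n r
  obtain ⟨L, hLs, φ, hφ, hconv⟩ := hcomp.tendsto_subseq hmem
  have hr : ∀ r : ℚ, Tendsto (fun k => h (φ k) r) atTop (𝓝 (L r)) := by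
    intro r
    exact (tendsto_pi_nhds.1 hconv) r
  rw [hsdef, Set.mem_univ_pi] at hLs
  have hL0 : ∀ r : ℚ, 0 ≤ L r := fun r => (hLs r).1
  have hLE : ∀ r : ℚ, L r ≤ E r := fun r => (hLs r).2
  have hLanti : ∀ r r' : ℚ, r ≤ r' → L r' ≤ L r := by
    intro r r' hrr
    apply le_of_tendsto_of_tendsto (hr r') (hr r)
    filter_upwards with k
    exact hanti _ (by exact_mod_cast hrr)
  set w : ℝ → ℝ := fun x => sSup (L '' {r : ℚ | x < (r:ℝ)}) with hwdef
  have hne : ∀ x : ℝ, (L '' {r : ℚ | x < (r:ℝ)}).Nonempty := by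
    intro x
    obtain ⟨r, hrx⟩ := exists_rat_gt x
    exact ⟨L r, ⟨r, hrx, rfl⟩⟩
  have hbdd : ∀ x : ℝ, BddAbove (L '' {r : ℚ | x < (r:ℝ)}) := by
    intro x
    refine ⟨E x, ?_⟩
    rintro y ⟨r, hrx, rfl⟩
    exact (hLE r).trans (hE (le_of_lt hrx))
  have hw0 : ∀ x, 0 ≤ w x := by
    intro x
    obtain ⟨r, hrx⟩ := exists_rat_gt x
    exact (hL0 r).trans (le_csSup (hbdd x) ⟨r, hrx, rfl⟩)
  have hwanti : Antitone w := by
    intro x y hxy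
    apply csSup_le (hne y)
    rintro z ⟨r, hry, rfl⟩
    exact le_csSup (hbdd x) ⟨r, lt_of_le_of_lt hxy hry, rfl⟩
  have hLle : ∀ (y : ℝ) (r : ℚ), y < (r:ℝ) → L r ≤ w y :=
    fun y r hy => le_csSup (hbdd y) ⟨r, hy, rfl⟩
  have hwle : ∀ (y : ℝ) (r : ℚ), (r:ℝ) ≤ y → w y ≤ L r := by
    intro y r hry
    apply csSup_le (hne y)
    rintro z ⟨r', hr'y, rfl⟩
    exact hLanti r r' (by exact_mod_cast (hry.trans_lt hr'y).le)
  refine ⟨φ, hφ, w, hwanti, hw0, {x | ¬ContinuousAt w x},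
    hwanti.countable_not_continuousAt, ?_⟩
  intro x hx
  rw [Set.mem_setOf_eq, not_not] at hx
  rw [Metric.tendsto_atTop]
  intro ε hε
  obtain ⟨z, ⟨r', hxr', rfl⟩, hzgt⟩ :=
    exists_lt_of_lt_csSup (hne x) (show w x - ε/2 < w x by linarith)
  obtain ⟨δ, hδpos, hδ⟩ := Metric.continuousAt_iff.1 hx (ε/2) (by linarith)
  have hdisty : dist (x - δ/2) x < δ := by
    rw [Real.dist_eq]
    rw [abs_of_nonpos (by linarith)]
    linarith
  have hwy : w (x - δ/2) < w x + ε/2 := by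
    have := hδ hdisty
    rw [Real.dist_eq, abs_lt] at this
    linarith [this.2]
  obtain ⟨r, hr1, hr2⟩ := exists_rat_btwn (show x - δ/2 < x by linarith)
  have hLr : L r < w x + ε/2 := lt_of_le_of_lt (hLle (x - δ/2) r hr1 |>.trans (le_refl _)) hwy
  have hev1 : ∀ᶠ k in atTop, h (φ k) r < w x + ε := by
    filter_upwards [(hr r).eventually (gt_mem_nhds (show L r < w x + ε/2 from hLr))] with k hk
    linarith [hk]
  have hev2 : ∀ᶠ k in atTop, w x - ε < h (φ k) r' := by
    filter_upwards [(hr r').eventually (lt_mem_nhds (show w x - ε/2 < L r' from hzgt))] with k hk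
    linarith [hk]
  obtain ⟨N, hN⟩ := (hev1.and hev2).exists_forall_of_atTop
  refine ⟨N, fun k hk => ?_⟩
  obtain ⟨hk1, hk2⟩ := hN k hk
  have hup : h (φ k) x ≤ h (φ k) r := hanti _ (le_of_lt hr2)
  have hdown : h (φ k) r' ≤ h (φ k) x := hanti _ (le_of_lt hxr')
  rw [Real.dist_eq, abs_lt]
  constructor <;> [linarith; linarith]

private lemma myenv {p A : ℝ} (hp : 1 < p) (hA : 0 < A) (u : ℝ → ℝ)
    (hmono : AntitoneOn u (Set.Ioi 0)) (hnn : ∀ t ∈ Set.Ioi (0:ℝ), 0 ≤ u t)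
    (hcon : ENNReal.ofReal p * (∫⁻ t in Set.Ioi (0:ℝ), ENNReal.ofReal (t ^ (p - 1) * u t)) ≤
        ENNReal.ofReal (A ^ p)) :
    ∀ t ∈ Set.Ioi (0:ℝ), u t ≤ A ^ p / (p * (t/2) ^ p) := by
  intro t ht
  rw [Set.mem_Ioi] at ht
  have ht2 : (0:ℝ) < t/2 := by linarith
  have hut : 0 ≤ u t := hnn t ht
  have key : ENNReal.ofReal ((t/2) ^ (p-1) * u t) * ENNReal.ofReal (t/2)
      ≤ ∫⁻ s in Set.Ioi (0:ℝ), ENNReal.ofReal (s ^ (p - 1) * u s) := by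
    have hsub : Set.Ioc (t/2) t ⊆ Set.Ioi (0:ℝ) := fun s hs => lt_trans ht2 hs.1
    calc ENNReal.ofReal ((t/2) ^ (p-1) * u t) * ENNReal.ofReal (t/2)
        = ∫⁻ _ in Set.Ioc (t/2) t, ENNReal.ofReal ((t/2) ^ (p-1) * u t) := by
          rw [setLIntegral_const, Real.volume_Ioc]
          congr 1
          ring_nf
      _ ≤ ∫⁻ s in Set.Ioc (t/2) t, ENNReal.ofReal (s ^ (p - 1) * u s) := by
          apply lintegral_mono_ae
          rw [ae_restrict_iff' measurableSet_Ioc]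
          filter_upwards with s hs
          apply ENNReal.ofReal_le_ofReal
          apply mul_le_mul
          · exact Real.rpow_le_rpow (le_of_lt ht2) hs.1.le (by linarith)
          · exact hmono (hsub hs) (Set.mem_Ioi.2 ht) hs.2
          · exact hnn t ht
          · exact Real.rpow_nonneg (by linarith [hs.1]) _
      _ ≤ ∫⁻ s in Set.Ioi (0:ℝ), ENNReal.ofReal (s ^ (p - 1) * u s) :=
          lintegral_mono_set hsub
  have key2 : ENNReal.ofReal p * (ENNReal.ofReal ((t/2) ^ (p-1) * u t) * ENNReal.ofReal (t/2))
      ≤ ENNReal.ofReal (A ^ p) :=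
    le_trans (mul_le_mul_right key _) hcon
  rw [← ENNReal.ofReal_mul (by positivity), ← ENNReal.ofReal_mul (by positivity)] at key2
  have key3 : p * ((t/2) ^ (p-1) * u t * (t/2)) ≤ A ^ p :=
    (ENNReal.ofReal_le_ofReal_iff (by positivity)).1 key2
  have hrw : (t/2) ^ (p-1) * u t * (t/2) = (t/2) ^ p * u t := by
    rw [mul_comm ((t/2) ^ (p-1) * u t) (t/2), ← mul_assoc]
    congr 1
    nth_rewrite 1 [← Real.rpow_one (t/2)]
    rw [← Real.rpow_add ht2]
    norm_num
  rw [hrw] at key3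
  rw [le_div_iff₀ (by positivity)]
  nlinarith [Real.rpow_pos_of_pos ht2 p, key3]

theorem stmt_18 (p q A B : ℝ) (hp : 1 < p) (hq : 1 < q) (hA : 0 < A) (hB : 0 < B)
    (d : ℕ) (hd : 1 ≤ d)
    (G : ℝ → ℝ)
    (hG : ∀ s : ℝ, G s = ∫ τ in (0:ℝ)..s, Real.exp (-((d.factorial * τ) ^ ((d:ℝ)⁻¹))))
    (C : (ℝ → ℝ) → Prop)
    (hC : ∀ u, C u ↔ (AntitoneOn u (Set.Ioi 0) ∧ (∀ t ∈ Set.Ioi (0:ℝ), 0 ≤ u t) ∧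
      ENNReal.ofReal p * (∫⁻ t in Set.Ioi (0:ℝ), ENNReal.ofReal (t ^ (p - 1) * u t)) ≤
        ENNReal.ofReal (A ^ p) ∧
      ENNReal.ofReal q * (∫⁻ t in Set.Ioi (0:ℝ), ENNReal.ofReal (t ^ (q - 1) * u t)) ≤
        ENNReal.ofReal (B ^ q))) :
    ∃ u : ℝ → ℝ, C u ∧
      (∫⁻ t in Set.Ioi (0:ℝ), ENNReal.ofReal (G (u t))) < ⊤ ∧
      ∀ v : ℝ → ℝ, C v →
        (∫⁻ t in Set.Ioi (0:ℝ), ENNReal.ofReal (G (v t))) ≤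
          ∫⁻ t in Set.Ioi (0:ℝ), ENNReal.ofReal (G (u t)) := by
  classical
  have hp0 : (0:ℝ) < p := by linarith
  set J : (ℝ → ℝ) → ℝ≥0∞ := fun v => ∫⁻ t in Set.Ioi (0:ℝ), ENNReal.ofReal (G (v t)) with hJdef
  have hGcont : Continuous G := myG_cont d hd G hG
  set cb : ℝ := 1 + ((2*d).factorial : ℝ) with hcbdef
  have hfacpos : (0:ℝ) < ((2*d).factorial : ℝ) := by exact_mod_cast (2*d).factorial_pos
  have hcbpos : 0 < cb := by rw [hcbdef]; linarith
  set E : ℝ → ℝ := fun t => A^p / (p * (t/2)^p) with hEdef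
  have hEanti : AntitoneOn E (Set.Ioi 0) := by
    intro a ha b hb hab
    rw [Set.mem_Ioi] at ha hb
    rw [hEdef]
    apply div_le_div_of_nonneg_left (by positivity) (by positivity)
    have : (a/2)^p ≤ (b/2)^p := Real.rpow_le_rpow (by linarith) (by linarith) (le_of_lt hp0)
    nlinarith
  have henv : ∀ v, C v → ∀ t ∈ Set.Ioi (0:ℝ), v t ≤ E t := by
    intro v hv
    rw [hC] at hv
    exact myenv hp hA v hv.1 hv.2.1 hv.2.2.1
  set Φ : ℝ → ℝ≥0∞ := fun t => ENNReal.ofReal (min cb (E t)) with hΦdef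
  have hΦfin : (∫⁻ t in Set.Ioi (0:ℝ), Φ t) < ⊤ := by
    have hsplit : (∫⁻ t in Set.Ioi (0:ℝ), Φ t)
        = (∫⁻ t in Set.Ioc (0:ℝ) 1, Φ t) + ∫⁻ t in Set.Ioi (1:ℝ), Φ t := by
      rw [← lintegral_union measurableSet_Ioi (Set.Ioc_disjoint_Ioi le_rfl),
        Set.Ioc_union_Ioi_eq_Ioi zero_le_one]
    have h1 : (∫⁻ t in Set.Ioc (0:ℝ) 1, Φ t) ≤ ENNReal.ofReal cb := by
      calc ∫⁻ t in Set.Ioc (0:ℝ) 1, Φ t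
          ≤ ∫⁻ _ in Set.Ioc (0:ℝ) 1, ENNReal.ofReal cb :=
            lintegral_mono (fun t => ENNReal.ofReal_le_ofReal (min_le_left _ _))
        _ = ENNReal.ofReal cb * volume (Set.Ioc (0:ℝ) 1) := setLIntegral_const _ _
        _ = ENNReal.ofReal cb := by rw [Real.volume_Ioc]; norm_num
    have hEeq : ∀ t ∈ Set.Ioi (1:ℝ), (A^p * 2^p / p) * t ^ (-p) = E t := by
      intro t ht
      have ht0 : (0:ℝ) < t := lt_trans one_pos ht
      have htp : (0:ℝ) < t ^ p := Real.rpow_pos_of_pos ht0 p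
      have h2p : (0:ℝ) < (2:ℝ) ^ p := Real.rpow_pos_of_pos two_pos p
      rw [hEdef]
      simp only
      rw [Real.div_rpow (le_of_lt ht0) (by norm_num : (0:ℝ) ≤ 2),
        Real.rpow_neg (le_of_lt ht0)]
      field_simp
    have hIntE : IntegrableOn E (Set.Ioi (1:ℝ)) volume := by
      apply IntegrableOn.congr_fun _ hEeq measurableSet_Ioi
      exact (integrableOn_Ioi_rpow_of_lt (by linarith) one_pos).const_mul _
    have h2 : (∫⁻ t in Set.Ioi (1:ℝ), Φ t) < ⊤ := by
      calc ∫⁻ t in Set.Ioi (1:ℝ), Φ t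
          ≤ ∫⁻ t in Set.Ioi (1:ℝ), ENNReal.ofReal (E t) :=
            lintegral_mono (fun t => ENNReal.ofReal_le_ofReal (min_le_right _ _))
        _ < ⊤ := hIntE.lintegral_lt_top
    rw [hsplit]
    exact ENNReal.add_lt_top.2 ⟨lt_of_le_of_lt h1 ENNReal.ofReal_lt_top, h2⟩
  have hptwise : ∀ v, C v → ∀ t ∈ Set.Ioi (0:ℝ), ENNReal.ofReal (G (v t)) ≤ Φ t := by
    intro v hv t ht
    have hvt0 : 0 ≤ v t := ((hC v).1 hv).2.1 t ht
    apply ENNReal.ofReal_le_ofReal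
    apply le_min
    · exact myG_le_bound d hd G hG hvt0
    · exact (myG_le_self d hd G hG hvt0).trans (henv v hv t ht)
  have hJle : ∀ v, C v → J v ≤ ∫⁻ t in Set.Ioi (0:ℝ), Φ t := by
    intro v hv
    apply lintegral_mono_ae
    filter_upwards [ae_restrict_mem measurableSet_Ioi] with t ht
    exact hptwise v hv t ht
  set S : ℝ≥0∞ := ⨆ (v) (_ : C v), J v with hSdef
  have hSle : S ≤ ∫⁻ t in Set.Ioi (0:ℝ), Φ t :=
    iSup_le fun v => iSup_le fun hv => hJle v hv
  have hSfin : S < ⊤ := lt_of_le_of_lt hSle hΦfin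
  have hC0 : C (fun _ => 0) := by
    rw [hC]
    refine ⟨fun a _ b _ _ => le_rfl, fun t _ => le_rfl, ?_, ?_⟩ <;> simp
  have hseq : ∀ n : ℕ, ∃ v, C v ∧ S ≤ J v + ((n:ℝ≥0∞)+1)⁻¹ := by
    intro n
    rcases eq_or_ne S 0 with h0 | h0
    · exact ⟨fun _ => 0, hC0, by rw [h0]; exact zero_le ..⟩
    · have hlt : S - ((n:ℝ≥0∞)+1)⁻¹ < S :=
        ENNReal.sub_lt_self hSfin.ne h0 (by simp)
      rw [hSdef] at hlt
      rw [lt_iSup_iff] at hlt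
      obtain ⟨v, hv⟩ := hlt
      rw [lt_iSup_iff] at hv
      obtain ⟨hCv, hv⟩ := hv
      exact ⟨v, hCv, tsub_le_iff_right.1 (le_of_lt hv)⟩
  choose u hCu hJu using hseq
  -- transformed sequence
  set hn : ℕ → ℝ → ℝ := fun n x => u n (Real.exp x) with hhndef
  have hnanti : ∀ n, Antitone (hn n) := by
    intro n x y hxy
    exact ((hC _).1 (hCu n)).1 (Set.mem_Ioi.2 (Real.exp_pos x)) (Set.mem_Ioi.2 (Real.exp_pos y))
      (Real.exp_le_exp.2 hxy)
  have hnbd : ∀ n x, hn n x ∈ Set.Icc 0 (E (Real.exp x)) := by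
    intro n x
    constructor
    · exact ((hC _).1 (hCu n)).2.1 _ (Set.mem_Ioi.2 (Real.exp_pos x))
    · exact henv _ (hCu n) _ (Set.mem_Ioi.2 (Real.exp_pos x))
  have hEbaranti : Antitone (fun x => E (Real.exp x)) := by
    intro x y hxy
    exact hEanti (Set.mem_Ioi.2 (Real.exp_pos x)) (Set.mem_Ioi.2 (Real.exp_pos y))
      (Real.exp_le_exp.2 hxy)
  obtain ⟨φ, hφ, w, hwanti, hw0, N, hNc, hwc⟩ := myhelly hn _ hEbaranti hnanti hnbd
  set U : ℝ → ℝ := fun t => w (Real.log t) with hUdef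
  have hUanti : AntitoneOn U (Set.Ioi 0) := by
    intro a ha b hb hab
    exact hwanti (Real.log_le_log (Set.mem_Ioi.1 ha) hab)
  have hUnn : ∀ t ∈ Set.Ioi (0:ℝ), 0 ≤ U t := fun t _ => hw0 _
  -- measurability of u n on Ioi 0
  have hmeasu : ∀ n, AEMeasurable (u n) (volume.restrict (Set.Ioi 0)) := by
    intro n
    have h1 : Measurable (fun t : ℝ => hn n (Real.log t)) :=
      (hnanti n).measurable.comp Real.measurable_log
    apply h1.aemeasurable.congr
    filter_upwards [ae_restrict_mem measurableSet_Ioi] with t ht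
    rw [hhndef]
    simp only
    rw [Real.exp_log (Set.mem_Ioi.1 ht)]
  have hUmeas : AEMeasurable U (volume.restrict (Set.Ioi 0)) :=
    (hwanti.measurable.comp Real.measurable_log).aemeasurable
  -- a.e. convergence on Ioi 0
  have haeconv : ∀ᵐ t ∂(volume.restrict (Set.Ioi 0)),
      Tendsto (fun k => u (φ k) t) atTop (𝓝 (U t)) := by
    have hN0 : volume (Real.exp '' N) = 0 := (hNc.image _).measure_zero _
    have hae : ∀ᵐ t ∂volume, t ∉ Real.exp '' N :=
      measure_eq_zero_iff_ae_notMem.mp hN0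
    filter_upwards [ae_restrict_mem measurableSet_Ioi, ae_restrict_of_ae hae] with t ht htn
    have hlogn : Real.log t ∉ N := by
      intro hmem
      exact htn ⟨Real.log t, hmem, Real.exp_log (Set.mem_Ioi.1 ht)⟩
    have := hwc (Real.log t) hlogn
    rw [hhndef] at this
    simp only at this
    rw [Real.exp_log (Set.mem_Ioi.1 ht)] at this
    exact this
  -- Fatou for the constraints
  have hfatou : ∀ (r R : ℝ), 1 < r → 0 < R →
      (∀ n, ENNReal.ofReal r *
        (∫⁻ t in Set.Ioi (0:ℝ), ENNReal.ofReal (t ^ (r - 1) * u n t)) ≤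
          ENNReal.ofReal (R ^ r)) →
      ENNReal.ofReal r * (∫⁻ t in Set.Ioi (0:ℝ), ENNReal.ofReal (t ^ (r - 1) * U t)) ≤
        ENNReal.ofReal (R ^ r) := by
    intro r R hr hR hcon
    have hrc : Continuous fun t : ℝ => t ^ (r-1) :=
      continuous_iff_continuousAt.2 fun x =>
        Real.continuousAt_rpow_const _ _ (Or.inr (by linarith))
    have hrpos : (0:ℝ≥0∞) < ENNReal.ofReal r := ENNReal.ofReal_pos.2 (by linarith)
    have hIb : ∀ k : ℕ, (∫⁻ t in Set.Ioi (0:ℝ), ENNReal.ofReal (t ^ (r - 1) * u (φ k) t))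
        ≤ ENNReal.ofReal (R ^ r) / ENNReal.ofReal r := by
      intro k
      rw [ENNReal.le_div_iff_mul_le (Or.inl hrpos.ne') (Or.inl ENNReal.ofReal_ne_top),
        mul_comm]
      exact hcon (φ k)
    have hmeasf : ∀ k : ℕ, AEMeasurable
        (fun t => ENNReal.ofReal (t ^ (r - 1) * u (φ k) t)) (volume.restrict (Set.Ioi 0)) := by
      intro k
      exact ENNReal.measurable_ofReal.comp_aemeasurable
        ((hrc.measurable.aemeasurable.mul (hmeasu (φ k))))
    have haeq : ∀ᵐ t ∂(volume.restrict (Set.Ioi 0)),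
        ENNReal.ofReal (t ^ (r - 1) * U t)
          = liminf (fun k => ENNReal.ofReal (t ^ (r - 1) * u (φ k) t)) atTop := by
      filter_upwards [haeconv] with t htconv
      have : Tendsto (fun k => ENNReal.ofReal (t ^ (r - 1) * u (φ k) t)) atTop
          (𝓝 (ENNReal.ofReal (t ^ (r - 1) * U t))) :=
        (ENNReal.continuous_ofReal.tendsto _).comp (tendsto_const_nhds.mul htconv)
      exact this.liminf_eq.symm
    calc ENNReal.ofReal r * ∫⁻ t in Set.Ioi (0:ℝ), ENNReal.ofReal (t ^ (r - 1) * U t)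
        = ENNReal.ofReal r * ∫⁻ t in Set.Ioi (0:ℝ),
            liminf (fun k => ENNReal.ofReal (t ^ (r-1) * u (φ k) t)) atTop := by
          rw [lintegral_congr_ae haeq]
      _ ≤ ENNReal.ofReal r * liminf (fun k =>
            ∫⁻ t in Set.Ioi (0:ℝ), ENNReal.ofReal (t ^ (r-1) * u (φ k) t)) atTop :=
          mul_le_mul_right (lintegral_liminf_le' hmeasf) _
      _ ≤ ENNReal.ofReal r * (ENNReal.ofReal (R ^ r) / ENNReal.ofReal r) := by
          apply mul_le_mul_right
          exact le_trans liminf_le_limsup (limsup_le_of_le (by isBoundedDefault)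
            (Filter.Eventually.of_forall hIb))
      _ = ENNReal.ofReal (R ^ r) := ENNReal.mul_div_cancel hrpos.ne' ENNReal.ofReal_ne_top
  have hCU : C U := by
    rw [hC]
    refine ⟨hUanti, hUnn, ?_, ?_⟩
    · exact hfatou p A hp hA (fun n => ((hC _).1 (hCu n)).2.2.1)
    · exact hfatou q B hq hB (fun n => ((hC _).1 (hCu n)).2.2.2)
  -- dominated convergence
  have hJtend : Tendsto (fun k => J (u (φ k))) atTop (𝓝 (J U)) := by
    rw [hJdef]
    simp only
    apply tendsto_lintegral_of_dominated_convergence' Φ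
    · intro k
      exact ENNReal.measurable_ofReal.comp_aemeasurable
        (hGcont.measurable.comp_aemeasurable (hmeasu (φ k)))
    · intro k
      filter_upwards [ae_restrict_mem measurableSet_Ioi] with t ht
      exact hptwise _ (hCu (φ k)) t ht
    · exact hΦfin.ne
    · filter_upwards [haeconv] with t htconv
      exact (ENNReal.continuous_ofReal.tendsto _).comp ((hGcont.tendsto _).comp htconv)
  -- S ≤ J U
  have hSJU : S ≤ J U := by
    have hstep : ∀ m : ℕ, S ≤ J U + ((m:ℝ≥0∞)+1)⁻¹ := by
      intro m
      rw [← tsub_le_iff_right]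
      apply ge_of_tendsto hJtend
      filter_upwards [eventually_ge_atTop m] with k hk
      have hmk : ((m:ℝ≥0∞)) ≤ ((φ k : ℕ) : ℝ≥0∞) := by
        exact_mod_cast le_trans hk hφ.le_apply
      have h1 : (((φ k : ℕ):ℝ≥0∞)+1)⁻¹ ≤ ((m:ℝ≥0∞)+1)⁻¹ :=
        ENNReal.inv_le_inv.2 (add_le_add_left hmk 1)
      calc S - ((m:ℝ≥0∞)+1)⁻¹ ≤ S - (((φ k:ℕ):ℝ≥0∞)+1)⁻¹ := tsub_le_tsub_left h1 S
        _ ≤ J (u (φ k)) := tsub_le_iff_right.2 (hJu (φ k))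
    apply ENNReal.le_of_forall_pos_le_add
    intro ε hε _
    obtain ⟨m, hm⟩ := ENNReal.exists_inv_nat_lt
      (show ((ε:ℝ≥0∞)) ≠ 0 by exact_mod_cast hε.ne')
    have hm1 : ((m:ℝ≥0∞)+1)⁻¹ ≤ ((m:ℝ≥0∞))⁻¹ :=
      ENNReal.inv_le_inv.2 (le_add_of_nonneg_right zero_le_one)
    calc S ≤ J U + ((m:ℝ≥0∞)+1)⁻¹ := hstep m
      _ ≤ J U + ((m:ℝ≥0∞))⁻¹ := add_le_add_right hm1 _
      _ ≤ J U + ε := add_le_add_right hm.le _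
  refine ⟨U, hCU, lt_of_le_of_lt (hJle U hCU) hΦfin, ?_⟩
  intro v hv
  calc J v ≤ S := le_iSup_of_le v (le_iSup_of_le hv le_rfl)
    _ ≤ J U := hSJU
end
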